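/- Let k and α be real numbers with 0 < k ≤ 1 and 0 ≤ α ≤ 1, let N ≥ 1 be a natural number, and let a_0, a_1, …, a_{N−1} be nonnegative real numbers with a_0 > 0 satisfying k·a_i ≥ ∑_{j=i+1}^{N−1} a_j for every i = 0, 1, …, N−2. Setting w = ((1+k)^α − 1)/k^α, one has (∑_{j=0}^{N−1} a_j)^α ≤ ∑_{j=0}^{N−1} w^j · a_j^α. -/

import Mathlib

open Real Finset

lemma key_step (k α t s : ℝ) (hk0 : 0 < k) (hα0 : 0 ≤ α) (hα1 : α ≤ 1)
    (ht : 0 ≤ t) (hs : 0 ≤ s) (h : s ≤ k * t) :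
    (t + s) ^ α ≤ t ^ α + ((1 + k) ^ α - 1) / k ^ α * s ^ α := by
  have hkα : (0:ℝ) < k ^ α := Real.rpow_pos_of_pos hk0 α
  have h1kα : (0:ℝ) < (1 + k) ^ α := Real.rpow_pos_of_pos (by linarith) α
  have hw : 0 ≤ ((1 + k) ^ α - 1) / k ^ α := by
    apply div_nonneg _ hkα.le
    have := Real.one_le_rpow (x := 1 + k) (z := α) (by linarith) hα0
    linarith
  rcases eq_or_lt_of_le ht with rfl | htpos
  · have hs0 : s = 0 := le_antisymm (by linarith) hs
    subst hs0
    have : (0:ℝ) ^ α ≤ (0:ℝ) ^ α := le_refl _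
    nlinarith [Real.rpow_nonneg (le_refl (0:ℝ)) α, mul_nonneg hw (Real.rpow_nonneg (le_refl (0:ℝ)) α)]
  · set w := ((1 + k) ^ α - 1) / k ^ α with hwdef
    have hc : 0 < t + s := by linarith
    set μ := (s / (t + s)) * ((1 + k) / k) with hμdef
    have hμ0 : 0 ≤ μ := by positivity
    have hμ1 : μ ≤ 1 := by
      rw [hμdef, div_mul_div_comm, div_le_one (by positivity)]
      nlinarith
    have C := Real.concaveOn_rpow hα0 hα1
    have h1k : (0:ℝ) < 1 + k := by linarith
    have e1 : μ • (1 / (1 + k)) + (1 - μ) • (1:ℝ) = t / (t + s) := by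
      simp only [smul_eq_mul, hμdef]
      field_simp
      ring
    have e2 : μ • (k / (1 + k)) + (1 - μ) • (0:ℝ) = s / (t + s) := by
      simp only [smul_eq_mul, hμdef]
      field_simp
      ring
    have hx1 : (1 / (1 + k) : ℝ) ∈ Set.Ici (0:ℝ) := Set.mem_Ici.mpr (by positivity)
    have hx2 : ((1:ℝ)) ∈ Set.Ici (0:ℝ) := Set.mem_Ici.mpr zero_le_one
    have hx3 : (k / (1 + k) : ℝ) ∈ Set.Ici (0:ℝ) := Set.mem_Ici.mpr (by positivity)
    have hx4 : ((0:ℝ)) ∈ Set.Ici (0:ℝ) := Set.mem_Ici.mpr le_rfl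
    have hμ1' : (0:ℝ) ≤ 1 - μ := by linarith
    have hab : μ + (1 - μ) = 1 := by ring
    have hA : μ • ((1 / (1 + k)) ^ α) + (1 - μ) • ((1:ℝ) ^ α) ≤ (t / (t + s)) ^ α := by
      have := C.2 hx1 hx2 hμ0 hμ1' hab
      rwa [e1] at this
    have hB : μ • ((k / (1 + k)) ^ α) + (1 - μ) • ((0:ℝ) ^ α) ≤ (s / (t + s)) ^ α := by
      have := C.2 hx3 hx4 hμ0 hμ1' hab
      rwa [e2] at this
    have hid : (1 / (1 + k)) ^ α + w * (k / (1 + k)) ^ α = 1 := by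
      rw [hwdef, Real.div_rpow (by norm_num) h1k.le, Real.div_rpow hk0.le h1k.le,
        Real.one_rpow]
      field_simp
      ring
    have hzero : (0:ℝ) ≤ (0:ℝ) ^ α := Real.rpow_nonneg (le_refl _) α
    have hone : ((1:ℝ)) ^ α = 1 := Real.one_rpow α
    have main1 : 1 ≤ (t / (t + s)) ^ α + w * (s / (t + s)) ^ α := by
      have hB' : μ * ((k / (1 + k)) ^ α) ≤ (s / (t + s)) ^ α := by
        have : (1 - μ) * ((0:ℝ) ^ α) ≥ 0 := mul_nonneg (by linarith) hzero
        simp only [smul_eq_mul] at hB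
        linarith
      have hA' : μ * ((1 / (1 + k)) ^ α) + (1 - μ) ≤ (t / (t + s)) ^ α := by
        simp only [smul_eq_mul, hone] at hA
        linarith
      nlinarith [mul_le_mul_of_nonneg_left hB' hw]
    have hdivt : (t / (t + s)) ^ α = t ^ α / (t + s) ^ α := Real.div_rpow ht hc.le α
    have hdivs : (s / (t + s)) ^ α = s ^ α / (t + s) ^ α := Real.div_rpow hs hc.le α
    have hcα : (0:ℝ) < (t + s) ^ α := Real.rpow_pos_of_pos hc α
    rw [hdivt, hdivs] at main1
    have := mul_le_mul_of_nonneg_right main1 hcα.le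
    calc (t + s) ^ α = 1 * (t + s) ^ α := (one_mul _).symm
      _ ≤ (t ^ α / (t + s) ^ α + w * (s ^ α / (t + s) ^ α)) * (t + s) ^ α := this
      _ = t ^ α + w * s ^ α := by field_simp

theorem stmt_12 (k α : ℝ) (hk0 : 0 < k) (hk1 : k ≤ 1) (hα0 : 0 ≤ α) (hα1 : α ≤ 1)
    (N : ℕ) (hN : 1 ≤ N) (a : ℕ → ℝ)
    (ha0 : ∀ j, j < N → 0 ≤ a j) (ha0pos : 0 < a 0)
    (hdom : ∀ i, i + 1 < N → k * a i ≥ ∑ j ∈ Finset.Ico (i + 1) N, a j) :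
    (∑ j ∈ Finset.range N, a j) ^ α ≤
      ∑ j ∈ Finset.range N, (((1 + k) ^ α - 1) / k ^ α) ^ j * a j ^ α := by
  set w := ((1 + k) ^ α - 1) / k ^ α with hwdef
  rcases eq_or_lt_of_le hα0 with rfl | hαpos
  · -- α = 0
    have hS : 0 < ∑ j ∈ Finset.range N, a j := by
      have : ∑ j ∈ Finset.range N, a j ≥ a 0 := by
        apply Finset.single_le_sum (f := a) (fun j hj => ha0 j (Finset.mem_range.mp hj))
        exact Finset.mem_range.mpr (by omega)
      linarith
    have hw0 : w = 0 := by
      simp [hwdef, Real.rpow_zero]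
    rw [Real.rpow_zero, hw0]
    have : ∑ j ∈ Finset.range N, (0:ℝ) ^ j * a j ^ (0:ℝ) =
        ∑ j ∈ Finset.range N, (0:ℝ) ^ j := by
      apply Finset.sum_congr rfl
      intro j hj
      rw [Real.rpow_zero, mul_one]
    rw [this]
    have hone : ∑ j ∈ Finset.range N, (0:ℝ) ^ j = 1 := by
      rw [Finset.sum_eq_single 0]
      · norm_num
      · intro b _ hb; simp [zero_pow hb]
      · intro h; exact absurd (Finset.mem_range.mpr (by omega)) h
    rw [hone]
  · -- α > 0
    have key : ∀ d i, i + d = N →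
        (∑ j ∈ Finset.Ico i N, a j) ^ α ≤ ∑ j ∈ Finset.Ico i N, w ^ (j - i) * a j ^ α := by
      intro d
      induction d with
      | zero =>
        intro i hi
        have : i = N := by omega
        subst this
        simp [Real.zero_rpow (ne_of_gt hαpos)]
      | succ d ih =>
        intro i hi
        have hiN : i < N := by omega
        have hsplit := Finset.sum_eq_sum_Ico_succ_bot hiN a
        set s := ∑ j ∈ Finset.Ico (i + 1) N, a j with hsdef
        have hs0 : 0 ≤ s := Finset.sum_nonneg fun j hj =>
          ha0 j (Finset.mem_Ico.mp hj).2
        have hai : 0 ≤ a i := ha0 i hiN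
        have hsk : s ≤ k * a i := by
          rcases eq_or_lt_of_le (Nat.succ_le_of_lt hiN) with h | h
        -- i+1 = N : empty sum
          · have : s = 0 := by rw [hsdef, ← h]; simp
            rw [this]; positivity
          · exact hdom i h
        have hkey := key_step k α (a i) s hk0 hα0 hα1 hai hs0 hsk
        have ihs := ih (i + 1) (by omega)
        have hw : 0 ≤ w := by
          rw [hwdef]
          apply div_nonneg _ (Real.rpow_pos_of_pos hk0 α).le
          have := Real.one_le_rpow (x := 1 + k) (z := α) (by linarith) hα0
          linarith
        calc (∑ j ∈ Finset.Ico i N, a j) ^ α = (a i + s) ^ α := by rw [hsplit]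
          _ ≤ a i ^ α + w * s ^ α := hkey
          _ ≤ a i ^ α + w * ∑ j ∈ Finset.Ico (i+1) N, w ^ (j - (i+1)) * a j ^ α := by
              have := mul_le_mul_of_nonneg_left ihs hw
              linarith
          _ = ∑ j ∈ Finset.Ico i N, w ^ (j - i) * a j ^ α := by
              rw [Finset.sum_eq_sum_Ico_succ_bot hiN (fun j => w ^ (j - i) * a j ^ α)]
              simp only [Nat.sub_self, pow_zero, one_mul]
              congr 1
              rw [Finset.mul_sum]
              apply Finset.sum_congr rfl
              intro j hj
              have hj' : i + 1 ≤ j := (Finset.mem_Ico.mp hj).1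
              rw [← mul_assoc, ← pow_succ']
              congr 2
              omega
    have hfin := key N 0 (by omega)
    rw [Finset.range_eq_Ico]
    exact le_of_le_of_eq hfin (Finset.sum_congr rfl fun j hj => by rw [Nat.sub_zero])
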